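/- Let ν be a real constant and let r, p, q : ℝ → ℝ be sufficiently differentiable functions satisfying for all x: r'(x) = −p(x)q(x), q''(x) = (x² − ν − 1) q(x) + 2 q(x)² p(x), p''(x) = (x² − ν + 1) p(x) + 2 p(x)² q(x), and p(x)q'(x) − q(x)p'(x) = 2 r(x). Then r is four times differentiable and satisfies for all x: r''''(x) = 4(x² − ν) r''(x) + 4x r'(x) − 12 r'(x) r''(x) − 4 r(x). (With ν = 2n this is the fourth-order equation for r = R(ξ, ξ) obtained from the m = 1 case of the extended Hermite system, whose first integral r''' = 4(ξ² − 2n)r' − 4ξr − 6r'² integrates to Painlevé IV.) -/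

import Mathlib

/-- **Fourth-order ODE for `r` in the `m = 1` Hermite case (Section V of Tracy–Widom,
"Differential Equations for Dyson Processes").**  If
`r' = −pq`, `q'' = (x² − ν − 1)q + 2q²p`, `p'' = (x² − ν + 1)p + 2p²q` and
`pq' − qp' = 2r`, then `r` is four times differentiable and
`r'''' = 4(x² − ν)r'' + 4x r' − 12 r' r'' − 4r`.
(With `ν = 2n` this is the equation whose first integral
`r''' = 4(ξ² − 2n)r' − 4ξr − 6r'²` integrates to Painlevé IV.) -/
theorem hermite_m1_fourth_order_ode (ν : ℝ) (r p q : ℝ → ℝ)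
    (hqd : ∀ x, DifferentiableAt ℝ q x)
    (hpd : ∀ x, DifferentiableAt ℝ p x)
    (hr : ∀ x, HasDerivAt r (-(p x * q x)) x)
    (hq : ∀ x, HasDerivAt (deriv q) ((x ^ 2 - ν - 1) * q x + 2 * q x ^ 2 * p x) x)
    (hp : ∀ x, HasDerivAt (deriv p) ((x ^ 2 - ν + 1) * p x + 2 * p x ^ 2 * q x) x)
    (hw : ∀ x, p x * deriv q x - q x * deriv p x = 2 * r x) :
    (∀ x, DifferentiableAt ℝ (deriv r) x) ∧
    (∀ x, DifferentiableAt ℝ (deriv (deriv r)) x) ∧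
    (∀ x, DifferentiableAt ℝ (deriv (deriv (deriv r))) x) ∧
    (∀ x, deriv (deriv (deriv (deriv r))) x
      = 4 * (x ^ 2 - ν) * deriv (deriv r) x + 4 * x * deriv r x
        - 12 * deriv r x * deriv (deriv r) x - 4 * r x) := by
  -- first derivative of r as a function
  have hr1 : deriv r = fun y => -(p y * q y) := funext fun y => (hr y).deriv
  -- second derivative
  have h1 : ∀ x, HasDerivAt (deriv r)
      (-(deriv p x * q x + p x * deriv q x)) x := by
    intro x
    rw [hr1]
    exact ((hpd x).hasDerivAt.mul (hqd x).hasDerivAt).neg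
  have hr2 : deriv (deriv r) = fun y => -(deriv p y * q y + p y * deriv q y) :=
    funext fun y => (h1 y).deriv
  -- third derivative
  have h2 : ∀ x, HasDerivAt (deriv (deriv r))
      (-(((x ^ 2 - ν + 1) * p x + 2 * p x ^ 2 * q x) * q x + deriv p x * deriv q x
        + (deriv p x * deriv q x
          + p x * ((x ^ 2 - ν - 1) * q x + 2 * q x ^ 2 * p x)))) x := by
    intro x
    rw [hr2]
    have H := (((hp x).mul (hqd x).hasDerivAt).add
      ((hpd x).hasDerivAt.mul (hq x))).neg
    exact H
  -- simplified form of the third derivative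
  have hr3 : deriv (deriv (deriv r)) = fun y =>
      -(2 * (y ^ 2 - ν) * (p y * q y) + 4 * p y ^ 2 * q y ^ 2
        + 2 * (deriv p y * deriv q y)) := by
    funext y
    rw [(h2 y).deriv]
    ring
  -- fourth derivative
  have h3 : ∀ x, HasDerivAt (deriv (deriv (deriv r)))
      (-(4 * x * (p x * q x)
        + 2 * (x ^ 2 - ν) * (deriv p x * q x + p x * deriv q x)
        + 8 * (p x * q x) * (deriv p x * q x + p x * deriv q x)
        + 2 * (((x ^ 2 - ν + 1) * p x + 2 * p x ^ 2 * q x) * deriv q x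
          + deriv p x * ((x ^ 2 - ν - 1) * q x + 2 * q x ^ 2 * p x)))) x := by
    intro x
    rw [hr3]
    have hxsq : HasDerivAt (fun y : ℝ => y ^ 2 - ν) (2 * x) x := by
      simpa using (hasDerivAt_pow 2 x).sub_const ν
    have hpq : HasDerivAt (fun y => p y * q y)
        (deriv p x * q x + p x * deriv q x) x :=
      (hpd x).hasDerivAt.mul (hqd x).hasDerivAt
    have H := ((((hxsq.const_mul 2).mul hpq).add
        ((((hpd x).hasDerivAt.pow 2).const_mul 4).mul ((hqd x).hasDerivAt.pow 2))).add
        (((hp x).mul (hq x)).const_mul 2)).neg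
    refine H.congr_deriv ?_
    norm_num [Pi.pow_apply] <;> ring
  refine ⟨fun x => (h1 x).differentiableAt, fun x => (h2 x).differentiableAt,
    fun x => (h3 x).differentiableAt, fun x => ?_⟩
  rw [(h3 x).deriv, (h1 x).deriv, (hr x).deriv]
  linear_combination (-2 : ℝ) * hw x
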